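/- arXiv:1301.4528 — 2 statements merged into one kernel-verified Lean document; each statement's English description precedes it below -/
import Mathlib

section
/- Let B : [0,∞) → [0,∞) be a Bernstein function with B(0)=0 satisfying B(u) ≥ c·u^(α/2) for all u ≥ u₀, where α ∈ (0,2) and c, u₀ > 0. Then for any γ > 0 there exists a constant C > 0 such that for all t > 0, 1 + (1/Γ(γ)) ∫₀^∞ u^(γ-1) e^(-t·B(u)) du ≤ C / (1 ∧ t^(2γ/α)). -/
open MeasureTheory Real Set

lemma aux_integrableOn {p s b : ℝ} (hp : 0 < p) (hs : -1 < s) (hb : 0 < b) :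
    IntegrableOn (fun x : ℝ => x ^ s * Real.exp (-b * x ^ p)) (Ioi 0) := by
  have key : IntegrableOn (fun y : ℝ => y ^ ((s + 1) / p - 1) * Real.exp (-b * y)) (Ioi 0) := by
    have := integrableOn_rpow_mul_exp_neg_mul_rpow
      (show -1 < (s + 1) / p - 1 by
        have : 0 < (s + 1) / p := div_pos (by linarith) hp
        linarith) one_pos hb
    simpa [Real.rpow_one] using this
  have h := (integrableOn_Ioi_comp_rpow_iff'
      (fun y : ℝ => y ^ ((s + 1) / p - 1) * Real.exp (-b * y)) hp.ne').mpr key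
  refine h.congr_fun (fun x hx => ?_) measurableSet_Ioi
  have hx0 : (0 : ℝ) < x := hx
  have h1 : (x ^ p) ^ ((s + 1) / p - 1) = x ^ (s + 1 - p) := by
    rw [← Real.rpow_mul hx0.le]
    congr 1
    field_simp
  beta_reduce
  rw [smul_eq_mul, h1, ← mul_assoc, ← Real.rpow_add hx0]
  congr 2
  ring

/-- If a Bernstein function `B` satisfies `B u ≥ c * u^(α/2)` for `u ≥ u₀`, then for any
`γ > 0` there is `C > 0` with `1 + Γ(γ)⁻¹ ∫₀^∞ u^(γ-1) e^(-t B u) du ≤ C / (1 ∧ t^(2γ/α))`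
for all `t > 0`. -/
theorem stmt0 (B : ℝ → ℝ) (α c u₀ : ℝ)
    (hBmeas : Measurable B) (hBnn : ∀ u, 0 ≤ u → 0 ≤ B u) (hB0 : B 0 = 0)
    (hα0 : 0 < α) (hα2 : α < 2) (hc : 0 < c) (hu₀ : 0 < u₀)
    (hBlow : ∀ u, u₀ ≤ u → c * u ^ (α / 2) ≤ B u) :
    ∀ γ > (0 : ℝ), ∃ C > (0 : ℝ), ∀ t > (0 : ℝ),
      1 + (1 / Real.Gamma γ) *
          ∫ u in Set.Ioi (0 : ℝ), u ^ (γ - 1) * Real.exp (-(t * B u))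
        ≤ C / min 1 (t ^ (2 * γ / α)) := by
  intro γ hγ
  set β := 2 * γ / α with hβdef
  have hβ : 0 < β := by positivity
  have hΓ : 0 < Real.Gamma γ := Real.Gamma_pos_of_pos hγ
  set A : ℝ := ∫ u in Ioc (0 : ℝ) u₀, u ^ (γ - 1) with hA
  have hAnn : 0 ≤ A := setIntegral_nonneg measurableSet_Ioc
    (fun u hu => Real.rpow_nonneg hu.1.le _)
  set K : ℝ := c ^ (-β) * (1 / (α / 2)) * Real.Gamma β with hK
  have hKnn : 0 ≤ K := by positivity
  refine ⟨1 + (1 / Real.Gamma γ) * (A + K), by positivity, ?_⟩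
  intro t ht
  set f : ℝ → ℝ := fun u => u ^ (γ - 1) * Real.exp (-(t * B u)) with hf
  have hγ1 : (-1 : ℝ) < γ - 1 := by linarith
  have hfm : AEStronglyMeasurable f (volume.restrict (Ioi (0:ℝ))) := by
    refine Measurable.aestronglyMeasurable ?_
    exact (measurable_id'.pow_const _).mul ((hBmeas.const_mul t).neg.exp)
  -- reference dominating function
  set g : ℝ → ℝ := fun u => u ^ (γ - 1) * Real.exp (-(t * c) * u ^ (α / 2)) with hg
  have hgint : IntegrableOn g (Ioi 0) := aux_integrableOn (by positivity) hγ1 (by positivity)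
  -- integrability of f on Ioc 0 u₀
  have hint1 : IntegrableOn f (Ioc 0 u₀) := by
    have hgi : IntegrableOn (fun u : ℝ => u ^ (γ - 1)) (Ioc 0 u₀) := by
      have := intervalIntegral.intervalIntegrable_rpow' (a := 0) (b := u₀) hγ1
      rwa [intervalIntegrable_iff_integrableOn_Ioc_of_le hu₀.le] at this
    refine hgi.mono' (hfm.mono_measure (Measure.restrict_mono Ioc_subset_Ioi_self le_rfl)) ?_
    filter_upwards [ae_restrict_mem measurableSet_Ioc] with u hu
    have hu0 : (0 : ℝ) < u := hu.1
    have : Real.exp (-(t * B u)) ≤ 1 := Real.exp_le_one_iff.mpr (by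
      have := hBnn u hu0.le
      nlinarith)
    have hb : u ^ (γ - 1) * Real.exp (-(t * B u)) ≤ u ^ (γ - 1) :=
      mul_le_of_le_one_right (Real.rpow_nonneg hu0.le _) this
    have hnn : 0 ≤ u ^ (γ - 1) * Real.exp (-(t * B u)) :=
      mul_nonneg (Real.rpow_nonneg hu0.le _) (Real.exp_nonneg _)
    simpa [hf, Real.norm_eq_abs, abs_of_nonneg hnn,
      abs_of_nonneg (Real.rpow_nonneg hu0.le (γ - 1))] using hb
  -- pointwise bound f ≤ g on Ioi u₀
  have hfg : ∀ u ∈ Ioi u₀, f u ≤ g u := by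
    intro u hu
    have hu0 : (0 : ℝ) < u := lt_trans hu₀ hu
    have h1 : -(t * B u) ≤ -(t * c) * u ^ (α / 2) := by
      have := hBlow u (le_of_lt hu)
      nlinarith
    exact mul_le_mul_of_nonneg_left (Real.exp_le_exp.mpr h1) (Real.rpow_nonneg hu0.le _)
  have hint2 : IntegrableOn f (Ioi u₀) := by
    refine (hgint.mono_set (Ioi_subset_Ioi hu₀.le)).mono'
      (hfm.mono_measure (Measure.restrict_mono (Ioi_subset_Ioi hu₀.le) le_rfl)) ?_
    filter_upwards [ae_restrict_mem measurableSet_Ioi] with u hu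
    have hu0 : (0 : ℝ) < u := lt_trans hu₀ hu
    have hnn : 0 ≤ f u := mul_nonneg (Real.rpow_nonneg hu0.le _) (Real.exp_nonneg _)
    calc ‖f u‖ = f u := by rw [Real.norm_eq_abs, abs_of_nonneg hnn]
      _ ≤ g u := hfg u hu
  -- split integral
  have hsplit : ∫ u in Ioi (0:ℝ), f u = (∫ u in Ioc (0:ℝ) u₀, f u) + ∫ u in Ioi u₀, f u := by
    rw [← setIntegral_union (Ioc_disjoint_Ioi le_rfl) measurableSet_Ioi hint1 hint2,
      Ioc_union_Ioi_eq_Ioi hu₀.le]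
  -- bound first piece
  have hb1 : (∫ u in Ioc (0:ℝ) u₀, f u) ≤ A := by
    refine setIntegral_mono_on hint1 ?_ measurableSet_Ioc (fun u hu => ?_)
    · have := intervalIntegral.intervalIntegrable_rpow' (a := 0) (b := u₀) hγ1
      rwa [intervalIntegrable_iff_integrableOn_Ioc_of_le hu₀.le] at this
    · have hu0 : (0 : ℝ) < u := hu.1
      have : Real.exp (-(t * B u)) ≤ 1 := Real.exp_le_one_iff.mpr (by
        have := hBnn u hu0.le
        nlinarith)
      exact mul_le_of_le_one_right (Real.rpow_nonneg hu0.le _) this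
  -- compute integral of g
  have hgval : ∫ u in Ioi (0:ℝ), g u = t ^ (-β) * K := by
    rw [hg]
    rw [integral_rpow_mul_exp_neg_mul_rpow (by positivity) hγ1 (by positivity)]
    have h1 : γ - 1 + 1 = γ := by ring
    have h3 : (γ - 1 + 1) / (α / 2) = β := by
      rw [h1, div_div_eq_mul_div, hβdef]; ring
    have h2 : -(γ - 1 + 1) / (α / 2) = -β := by rw [neg_div, h3]
    rw [h2, h3, Real.mul_rpow ht.le hc.le, hK]
    ring
  -- bound second piece
  have hb2 : (∫ u in Ioi u₀, f u) ≤ t ^ (-β) * K := by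
    calc (∫ u in Ioi u₀, f u) ≤ ∫ u in Ioi u₀, g u := by
          exact setIntegral_mono_on hint2 (hgint.mono_set (Ioi_subset_Ioi hu₀.le))
            measurableSet_Ioi hfg
      _ ≤ ∫ u in Ioi (0:ℝ), g u := by
          refine setIntegral_mono_set hgint ?_ (HasSubset.Subset.eventuallyLE (Ioi_subset_Ioi hu₀.le))
          filter_upwards [ae_restrict_mem measurableSet_Ioi] with u hu
          exact mul_nonneg (Real.rpow_nonneg (le_of_lt hu) _) (Real.exp_nonneg _)
      _ = t ^ (-β) * K := hgval
  have hIb : (∫ u in Ioi (0:ℝ), f u) ≤ A + t ^ (-β) * K := by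
    rw [hsplit]; exact add_le_add hb1 hb2
  -- conclude
  have hΓinv : 0 ≤ 1 / Real.Gamma γ := by positivity
  have hmain : 1 + (1 / Real.Gamma γ) * ∫ u in Ioi (0:ℝ), f u
      ≤ 1 + (1 / Real.Gamma γ) * (A + t ^ (-β) * K) := by
    gcongr
  refine le_trans hmain ?_
  rcases le_total 1 t with h1t | ht1
  · have hmin : min 1 (t ^ β) = 1 := min_eq_left (Real.one_le_rpow h1t hβ.le)
    rw [hmin, div_one]
    have h2 : t ^ (-β) ≤ 1 := Real.rpow_le_one_of_one_le_of_nonpos h1t (by linarith)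
    have h3 : t ^ (-β) * K ≤ K := mul_le_of_le_one_left hKnn h2
    have h4 := mul_le_mul_of_nonneg_left (add_le_add_left h3 A) hΓinv
    linarith
  · have hmin : min 1 (t ^ β) = t ^ β :=
      min_eq_right (Real.rpow_le_one ht.le ht1 hβ.le)
    rw [hmin]
    have htβ : 0 < t ^ β := Real.rpow_pos_of_pos ht _
    rw [le_div_iff₀ htβ]
    have hinv : t ^ (-β) * t ^ β = 1 := by
      rw [← Real.rpow_add ht]; simp
    have htβ1 : t ^ β ≤ 1 := Real.rpow_le_one ht.le ht1 hβ.le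
    have e : (1 + 1 / Real.Gamma γ * (A + t ^ (-β) * K)) * t ^ β
        = t ^ β + (1 / Real.Gamma γ * A) * t ^ β + 1 / Real.Gamma γ * K := by
      linear_combination (1 / Real.Gamma γ * K) * hinv
    rw [e]
    have h5 : (1 / Real.Gamma γ * A) * t ^ β ≤ 1 / Real.Gamma γ * A :=
      mul_le_of_le_one_right (mul_nonneg hΓinv hAnn) htβ1
    have h6 := mul_nonneg hΓinv hKnn
    nlinarith [mul_le_mul_of_nonneg_left hAnn hΓinv]
end

section
/- Let ℓ : [0,1] → [0,∞) be càdlàg increasing, β : [0,∞) → [0,∞) absolutely continuous increasing with β₀ = 0 and locally bounded derivative, and λ_t := ∫₀^t |β̇_s|² ds. Let ℓ^ε_t := Σ_{s ≤ t} Δℓ_s 1{Δℓ_s ≥ ε}. Then lim_{ε↓0} ∫₀^1 ((λ_{ℓ_{s−}} − λ_{ℓ^ε_{s−}}) + (λ_{ℓ_s} − λ_{ℓ^ε_s})) / (ℓ_s − ℓ_{s−}) · 1{ℓ_{s−} ≤ ℓ^ε_s} dℓ_s = 0, where the integrand is interpreted as 0 when Δℓ_s = 0. -/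
open MeasureTheory Filter Function Set Topology

/-- The big-jump truncation `ℓᵉ t = Σ_{0 < u ≤ t, Δℓ_u ≥ ε} Δℓ_u` of a purely-jump
increasing càdlàg function `ℓ`. -/
noncomputable def bigJumpPart (ℓ : ℝ → ℝ) (ε t : ℝ) : ℝ :=
  ∑' u : Set.Ioc (0:ℝ) t,
    if ε ≤ ℓ (u : ℝ) - Function.leftLim ℓ (u : ℝ)
      then ℓ (u : ℝ) - Function.leftLim ℓ (u : ℝ) else 0

namespace Stmt7Aux

/-- summability of indicators over subsets. -/
lemma summable_indicator_mono {g : ℝ → ℝ} (hg0 : ∀ u, 0 ≤ g u) {s t : Set ℝ}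
    (hst : s ⊆ t) (hsum : Summable (t.indicator g)) : Summable (s.indicator g) :=
  Summable.of_nonneg_of_le (fun u => indicator_apply_nonneg fun _ => hg0 u)
    (fun u => indicator_le_indicator_of_subset hst hg0 u) hsum

/-- comparison of two indicator tsums. -/
lemma tsum_indicator_mono {g₁ g₂ : ℝ → ℝ} (hg0 : ∀ u, 0 ≤ g₁ u) (hg12 : ∀ u, g₁ u ≤ g₂ u)
    {s t : Set ℝ} (hst : s ⊆ t) (hsum : Summable (t.indicator g₂)) :
    ∑' u, s.indicator g₁ u ≤ ∑' u, t.indicator g₂ u := by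
  refine Summable.tsum_le_tsum (fun u => ?_) ?_ hsum
  · calc s.indicator g₁ u ≤ t.indicator g₁ u := indicator_le_indicator_of_subset hst hg0 u
      _ ≤ t.indicator g₂ u := by
        classical
        simp only [indicator_apply]
        split_ifs
        · exact hg12 u
        · exact le_rfl
  · exact Summable.of_nonneg_of_le (fun u => indicator_apply_nonneg fun _ => hg0 u)
      (fun u => le_trans (indicator_le_indicator_of_subset hst hg0 u)
        (by classical
            simp only [indicator_apply]; split_ifs
            · exact hg12 u
            · exact le_rfl)) hsum

/-- The left limit of `t ↦ ∑' u, (Ioc 0 t).indicator g u` at `s > 0` is the sum over `Ioo 0 s`. -/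
lemma leftLim_sum_jumps {g : ℝ → ℝ} (hg0 : ∀ u, 0 ≤ g u) {s : ℝ} (hs : 0 < s)
    (hsumt : ∀ t, Summable ((Ioc (0:ℝ) t).indicator g)) :
    leftLim (fun t => ∑' u, (Ioc (0:ℝ) t).indicator g u) s
      = ∑' u, (Ioo (0:ℝ) s).indicator g u := by
  classical
  set h : ℝ → ℝ := fun t => ∑' u, (Ioc (0:ℝ) t).indicator g u with hh
  have hmono : Monotone h := fun a b hab =>
    tsum_indicator_mono hg0 (fun u => le_rfl) (Ioc_subset_Ioc_right hab) (hsumt b)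
  have hIoo : Summable ((Ioo (0:ℝ) s).indicator g) :=
    summable_indicator_mono hg0 Ioo_subset_Ioc_self (hsumt s)
  have hne : (𝓝[<] s) ≠ ⊥ := (inferInstance : (𝓝[<] s).NeBot).ne'
  refine leftLim_eq_of_tendsto ?_
  have htends := hmono.tendsto_nhdsLT s
  suffices hsup : sSup (h '' Iio s) = ∑' u, (Ioo (0:ℝ) s).indicator g u by
    rw [← hsup]; exact htends
  apply csSup_eq_of_forall_le_of_forall_lt_exists_gt
  · exact (nonempty_Iio).image _
  · rintro x ⟨t, ht, rfl⟩
    exact tsum_indicator_mono hg0 (fun u => le_rfl)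
      (fun u hu => ⟨hu.1, lt_of_le_of_lt hu.2 ht⟩) hIoo
  · intro w hw
    obtain ⟨F, hF⟩ : ∃ F : Finset ℝ, w < ∑ u ∈ F, (Ioo (0:ℝ) s).indicator g u :=
      (hIoo.hasSum.eventually (eventually_gt_nhds hw)).exists
    set F' := F.filter (fun u => u ∈ Ioo (0:ℝ) s) with hF'
    set t : ℝ := if hne : F'.Nonempty then max (F'.max' hne) (s/2) else s/2 with hts
    have ht_lt : t < s := by
      rw [hts]
      split_ifs with hne'
      · refine max_lt ?_ (by linarith)
        exact (Finset.mem_filter.1 (F'.max'_mem hne')).2.2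
      · linarith
    refine ⟨h t, ⟨t, ht_lt, rfl⟩, ?_⟩
    calc w < ∑ u ∈ F, (Ioo (0:ℝ) s).indicator g u := hF
      _ ≤ ∑ u ∈ F, (Ioc (0:ℝ) t).indicator g u := by
          refine Finset.sum_le_sum (fun u hu => ?_)
          by_cases hu' : u ∈ Ioo (0:ℝ) s
          · have hmem : u ∈ F' := Finset.mem_filter.2 ⟨hu, hu'⟩
            have hut : u ≤ t := by
              rw [hts, dif_pos ⟨u, hmem⟩]
              exact le_trans (F'.le_max' u hmem) (le_max_left _ _)
            rw [indicator_of_mem hu' g,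
              indicator_of_mem (show u ∈ Ioc (0:ℝ) t from ⟨hu'.1, hut⟩) g]
          · rw [indicator_of_notMem hu']
            exact indicator_apply_nonneg fun _ => hg0 u
      _ ≤ h t := Summable.sum_le_tsum F (fun u _ => indicator_apply_nonneg fun _ => hg0 u) (hsumt t)

/-- splitting the sum over `Ioc 0 s` as the sum over `Ioo 0 s` plus the term at `s`. -/
lemma sum_Ioc_split {g : ℝ → ℝ} (hg0 : ∀ u, 0 ≤ g u) {s : ℝ} (hs : 0 < s)
    (hsum : Summable ((Ioc (0:ℝ) s).indicator g)) :
    ∑' u, (Ioc (0:ℝ) s).indicator g u = (∑' u, (Ioo (0:ℝ) s).indicator g u) + g s := by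
  classical
  have hIoo : Summable ((Ioo (0:ℝ) s).indicator g) :=
    summable_indicator_mono hg0 Ioo_subset_Ioc_self hsum
  have h1 : HasSum (({s} : Set ℝ).indicator g) (g s) := by
    have : (({s} : Set ℝ).indicator g) = fun u => if u = s then g s else 0 := by
      funext u
      simp only [indicator_apply, mem_singleton_iff]
      split_ifs with h
      · rw [h]
      · rfl
    rw [this]
    exact hasSum_ite_eq s (g s)
  have hdis : Disjoint (Ioo (0:ℝ) s) ({s} : Set ℝ) := by
    rw [Set.disjoint_singleton_right]
    exact fun h => lt_irrefl s h.2
  have hdecomp : ∀ u, (Ioc (0:ℝ) s).indicator g u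
      = (Ioo (0:ℝ) s).indicator g u + ({s} : Set ℝ).indicator g u := by
    intro u
    rw [← Ioo_union_right hs, indicator_union_of_disjoint hdis]
  calc ∑' u, (Ioc (0:ℝ) s).indicator g u
      = ∑' u, ((Ioo (0:ℝ) s).indicator g u + ({s} : Set ℝ).indicator g u) :=
        tsum_congr hdecomp
    _ = (∑' u, (Ioo (0:ℝ) s).indicator g u) + ∑' u, ({s} : Set ℝ).indicator g u :=
        Summable.tsum_add hIoo h1.summable
    _ = (∑' u, (Ioo (0:ℝ) s).indicator g u) + g s := by rw [h1.tsum_eq]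

end Stmt7Aux

open Stmt7Aux

/-- The limit `I₂` in the proof of Lemma 2.2: for a purely-jump increasing càdlàg `ℓ` and
`λ t = ∫₀^t |β̇ s|² ds` with `β̇` locally bounded,
`lim_{ε↓0} ∫₀^1 ((λ_{ℓ_{s-}} − λ_{ℓᵉ_{s-}}) + (λ_{ℓ_s} − λ_{ℓᵉ_s}))/(ℓ_s − ℓ_{s-})
· 1_{ℓ_{s-} ≤ ℓᵉ_s} dℓ_s = 0`, the integrand being `0` when `Δℓ_s = 0`. -/
theorem stmt7 (ℓ : StieltjesFunction ℝ) (hℓ0 : ℓ 0 = 0) (hℓnn : ∀ t, 0 ≤ ℓ t)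
    (hsummable : ∀ t : ℝ,
      Summable (fun u : Set.Ioc (0:ℝ) t => ℓ (u : ℝ) - Function.leftLim ℓ (u : ℝ)))
    (hpurejump : ∀ t : ℝ, 0 ≤ t →
      ℓ t = ∑' u : Set.Ioc (0:ℝ) t, (ℓ (u : ℝ) - Function.leftLim ℓ (u : ℝ)))
    (βdot lam : ℝ → ℝ) (hβmeas : Measurable βdot)
    (hβbdd : ∀ K : ℝ, 0 < K → ∃ M, ∀ s ∈ Set.Icc (0:ℝ) K, |βdot s| ≤ M)
    (hlam : ∀ t, lam t = ∫ s in (0:ℝ)..t, (βdot s) ^ 2) :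
    Tendsto (fun ε : ℝ =>
        ∫ s in Set.Ioc (0:ℝ) 1,
          (if Function.leftLim ℓ s = ℓ s then 0 else
            ((lam (Function.leftLim ℓ s) - lam (Function.leftLim (bigJumpPart ℓ ε) s))
                + (lam (ℓ s) - lam (bigJumpPart ℓ ε s)))
              / (ℓ s - Function.leftLim ℓ s)
              * (if Function.leftLim ℓ s ≤ bigJumpPart ℓ ε s then 1 else 0))
          ∂ℓ.measure)
      (nhdsWithin 0 (Set.Ioi 0)) (nhds 0) := by
  classical
  -- basic notations
  set J : ℝ → ℝ := fun u => ℓ u - leftLim ℓ u with hJ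
  have hJ0 : ∀ u, 0 ≤ J u := fun u => sub_nonneg.2 (ℓ.mono.leftLim_le le_rfl)
  have hJsum : ∀ t, Summable ((Ioc (0:ℝ) t).indicator J) := fun t =>
    summable_subtype_iff_indicator.mp (hsummable t)
  set g : ℝ → ℝ → ℝ := fun ε u => if ε ≤ J u then J u else 0 with hg
  have hg0 : ∀ ε u, 0 ≤ g ε u := by
    intro ε u; rw [hg]; dsimp only; split_ifs
    · exact hJ0 u
    · exact le_rfl
  have hgJ : ∀ ε u, g ε u ≤ J u := by
    intro ε u; rw [hg]; dsimp only; split_ifs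
    · exact le_rfl
    · exact hJ0 u
  have hgsum : ∀ ε t, Summable ((Ioc (0:ℝ) t).indicator (g ε)) := fun ε t =>
    Summable.of_nonneg_of_le (fun u => indicator_apply_nonneg fun _ => hg0 ε u)
      (fun u => by
        classical
        simp only [indicator_apply]; split_ifs
        · exact hgJ ε u
        · exact le_rfl) (hJsum t)
  -- rewrite bigJumpPart via indicators
  have hB : ∀ ε, bigJumpPart ℓ ε = fun t => ∑' u, (Ioc (0:ℝ) t).indicator (g ε) u := by
    intro ε; funext t
    exact tsum_subtype (Ioc (0:ℝ) t) (g ε)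
  -- ℓ via indicators
  have hℓt : ∀ t, 0 ≤ t → ℓ t = ∑' u, (Ioc (0:ℝ) t).indicator J u := by
    intro t ht
    rw [hpurejump t ht]
    exact tsum_subtype (Ioc (0:ℝ) t) J
  -- monotonicity and bounds on B
  have hBmono : ∀ ε, Monotone (bigJumpPart ℓ ε) := by
    intro ε
    rw [hB ε]
    exact fun a b hab =>
      tsum_indicator_mono (hg0 ε) (fun u => le_rfl) (Ioc_subset_Ioc_right hab) (hgsum ε b)
  have hBnn : ∀ ε t, 0 ≤ bigJumpPart ℓ ε t := by
    intro ε t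
    rw [hB ε]
    exact tsum_nonneg fun u => indicator_apply_nonneg fun _ => hg0 ε u
  have hBle : ∀ ε t, 0 ≤ t → bigJumpPart ℓ ε t ≤ ℓ t := by
    intro ε t ht
    rw [hB ε, hℓt t ht]
    exact tsum_indicator_mono (hg0 ε) (hgJ ε) (subset_refl _) (hJsum t)
  -- left limits
  have hBleft : ∀ ε s, 0 < s →
      leftLim (bigJumpPart ℓ ε) s = ∑' u, (Ioo (0:ℝ) s).indicator (g ε) u := by
    intro ε s hs
    rw [hB ε]
    exact leftLim_sum_jumps (hg0 ε) hs (hgsum ε)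
  have hℓleft : ∀ s, 0 < s → leftLim ℓ s = ∑' u, (Ioo (0:ℝ) s).indicator J u := by
    intro s hs
    have h1 : leftLim (fun t => ∑' u, (Ioc (0:ℝ) t).indicator J u) s
        = ∑' u, (Ioo (0:ℝ) s).indicator J u := leftLim_sum_jumps hJ0 hs hJsum
    rw [← h1]
    have hne : (𝓝[<] s) ≠ ⊥ := (inferInstance : (𝓝[<] s).NeBot).ne'
    refine leftLim_eq_of_tendsto ?_
    have h2 : Tendsto (fun t => ∑' u, (Ioc (0:ℝ) t).indicator J u) (𝓝[<] s)
        (𝓝 (leftLim (fun t => ∑' u, (Ioc (0:ℝ) t).indicator J u) s)) := by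
      refine Monotone.tendsto_leftLim ?_ s
      exact fun a b hab =>
        tsum_indicator_mono hJ0 (fun u => le_rfl) (Ioc_subset_Ioc_right hab) (hJsum b)
    refine h2.congr' ?_
    filter_upwards [Ioo_mem_nhdsLT_of_mem (⟨hs, le_rfl⟩ : s ∈ Ioc (0:ℝ) s)] with t ht
    exact (hℓt t (le_of_lt ht.1)).symm
  have hBleftle : ∀ ε s, 0 < s → leftLim (bigJumpPart ℓ ε) s ≤ leftLim ℓ s := by
    intro ε s hs
    rw [hBleft ε s hs, hℓleft s hs]
    exact tsum_indicator_mono (hg0 ε) (hgJ ε) (subset_refl _)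
      (summable_indicator_mono hJ0 Ioo_subset_Ioc_self (hJsum s))
  have hBleftnn : ∀ ε s, 0 < s → 0 ≤ leftLim (bigJumpPart ℓ ε) s := by
    intro ε s hs
    rw [hBleft ε s hs]
    exact tsum_nonneg fun u => indicator_apply_nonneg fun _ => hg0 ε u
  have hℓleftnn : ∀ s, 0 < s → 0 ≤ leftLim ℓ s := by
    intro s hs
    calc (0:ℝ) = ℓ 0 := hℓ0.symm
      _ ≤ leftLim ℓ s := ℓ.mono.le_leftLim hs
  -- jump of B at s is at most the jump of ℓ
  have hBjump : ∀ ε s, 0 < s →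
      bigJumpPart ℓ ε s ≤ leftLim (bigJumpPart ℓ ε) s + J s := by
    intro ε s hs
    rw [hBleft ε s hs, hB ε]
    dsimp only
    rw [sum_Ioc_split (hg0 ε) hs (hgsum ε s)]
    exact add_le_add_right (hgJ ε s) _
  -- the Lipschitz constant for lam
  set K : ℝ := ℓ 1 + 1 with hK
  have hKpos : 0 < K := by have := hℓnn 1; linarith
  obtain ⟨M, hM⟩ := hβbdd K hKpos
  set C : ℝ := M ^ 2 with hC
  have hC0 : 0 ≤ C := sq_nonneg M
  -- integrability of βdot ^ 2 on subintervals of [0, K]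
  have intg : ∀ a b : ℝ, 0 ≤ a → a ≤ b → b ≤ K →
      IntervalIntegrable (fun s => βdot s ^ 2) volume a b := by
    intro a b ha hab hbK
    rw [intervalIntegrable_iff_integrableOn_Ioc_of_le hab]
    refine Integrable.mono' (g := fun _ => C)
      (integrableOn_const measure_Ioc_lt_top.ne)
      ((hβmeas.pow_const 2).aestronglyMeasurable) ?_
    refine (ae_restrict_iff' measurableSet_Ioc).2 (ae_of_all _ fun u hu => ?_)
    have huK : u ∈ Icc (0:ℝ) K := ⟨le_trans ha (le_of_lt hu.1), le_trans hu.2 hbK⟩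
    have h1 : |βdot u| ≤ M := hM u huK
    calc ‖βdot u ^ 2‖ = |βdot u| ^ 2 := by
          rw [Real.norm_eq_abs, abs_pow]
      _ ≤ M ^ 2 := pow_le_pow_left₀ (abs_nonneg _) h1 2
  -- the Lipschitz estimate
  have key : ∀ a b : ℝ, 0 ≤ a → a ≤ b → b ≤ K →
      0 ≤ lam b - lam a ∧ lam b - lam a ≤ C * (b - a) := by
    intro a b ha hab hbK
    have haK : a ≤ K := le_trans hab hbK
    have hint1 := intg 0 a le_rfl ha haK
    have hint2 := intg a b ha hab hbK
    have hsplit := intervalIntegral.integral_add_adjacent_intervals hint1 hint2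
    have hdiff : lam b - lam a = ∫ s in a..b, βdot s ^ 2 := by
      rw [hlam a, hlam b, ← hsplit]; ring
    constructor
    · rw [hdiff]
      exact intervalIntegral.integral_nonneg hab fun u _ => sq_nonneg _
    · rw [hdiff]
      have hle : ∀ u ∈ Icc a b, βdot u ^ 2 ≤ C := by
        intro u hu
        have huK : u ∈ Icc (0:ℝ) K := ⟨le_trans ha hu.1, le_trans hu.2 hbK⟩
        calc βdot u ^ 2 = |βdot u| ^ 2 := (sq_abs _).symm
          _ ≤ M ^ 2 := pow_le_pow_left₀ (abs_nonneg _) (hM u huK) 2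
      calc (∫ s in a..b, βdot s ^ 2) ≤ ∫ _s in a..b, C :=
            intervalIntegral.integral_mono_on hab hint2 intervalIntegrable_const hle
        _ = (b - a) * C := by rw [intervalIntegral.integral_const, smul_eq_mul]
        _ = C * (b - a) := mul_comm _ _
  have lam_mono : ∀ a b : ℝ, 0 ≤ a → a ≤ b → lam a ≤ lam b := by
    intro a b ha hab
    by_cases hbK : b ≤ K
    · linarith [(key a b ha hab hbK).1]
    · -- use K' := b, redo with a larger bound
      push_neg at hbK
      obtain ⟨M', hM'⟩ := hβbdd b (lt_trans hKpos hbK)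
      have hint1 : IntervalIntegrable (fun s => βdot s ^ 2) volume 0 a := by
        rw [intervalIntegrable_iff_integrableOn_Ioc_of_le ha]
        refine Integrable.mono' (g := fun _ => M' ^ 2)
          (integrableOn_const measure_Ioc_lt_top.ne)
          ((hβmeas.pow_const 2).aestronglyMeasurable) ?_
        refine (ae_restrict_iff' measurableSet_Ioc).2 (ae_of_all _ fun u hu => ?_)
        have hub : u ∈ Icc (0:ℝ) b := ⟨le_of_lt hu.1, le_trans hu.2 hab⟩
        calc ‖βdot u ^ 2‖ = |βdot u| ^ 2 := by
              rw [Real.norm_eq_abs, abs_pow]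
          _ ≤ M' ^ 2 := pow_le_pow_left₀ (abs_nonneg _) (hM' u hub) 2
      have hint2 : IntervalIntegrable (fun s => βdot s ^ 2) volume a b := by
        rw [intervalIntegrable_iff_integrableOn_Ioc_of_le hab]
        refine Integrable.mono' (g := fun _ => M' ^ 2)
          (integrableOn_const measure_Ioc_lt_top.ne)
          ((hβmeas.pow_const 2).aestronglyMeasurable) ?_
        refine (ae_restrict_iff' measurableSet_Ioc).2 (ae_of_all _ fun u hu => ?_)
        have hub : u ∈ Icc (0:ℝ) b := ⟨le_trans ha (le_of_lt hu.1), hu.2⟩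
        calc ‖βdot u ^ 2‖ = |βdot u| ^ 2 := by
              rw [Real.norm_eq_abs, abs_pow]
          _ ≤ M' ^ 2 := pow_le_pow_left₀ (abs_nonneg _) (hM' u hub) 2
      have hsplit := intervalIntegral.integral_add_adjacent_intervals hint1 hint2
      have : lam b - lam a = ∫ s in a..b, βdot s ^ 2 := by
        rw [hlam a, hlam b, ← hsplit]; ring
      have hnn : 0 ≤ ∫ s in a..b, βdot s ^ 2 :=
        intervalIntegral.integral_nonneg hab fun u _ => sq_nonneg _
      linarith
  -- the measurable version of lam
  set Lam : ℝ → ℝ := fun t => lam (max t 0) with hLam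
  have hLamMono : Monotone Lam := by
    intro a b hab
    exact lam_mono (max a 0) (max b 0) (le_max_right _ _)
      (max_le_max hab le_rfl)
  have hLamMeas : Measurable Lam := hLamMono.measurable
  have hLamEq : ∀ t, 0 ≤ t → Lam t = lam t := by
    intro t ht; rw [hLam]; dsimp only; rw [max_eq_left ht]
  -- the restricted measure is finite
  set μ : Measure ℝ := ℓ.measure.restrict (Ioc (0:ℝ) 1) with hμ
  have hfin : IsFiniteMeasure μ := by
    constructor
    rw [hμ, Measure.restrict_apply MeasurableSet.univ, univ_inter,
      StieltjesFunction.measure_Ioc]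
    exact ENNReal.ofReal_lt_top
  -- the integrand
  set F : ℝ → ℝ → ℝ := fun ε s =>
    (if Function.leftLim ℓ s = ℓ s then 0 else
      ((lam (Function.leftLim ℓ s) - lam (Function.leftLim (bigJumpPart ℓ ε) s))
          + (lam (ℓ s) - lam (bigJumpPart ℓ ε s)))
        / (ℓ s - Function.leftLim ℓ s)
        * (if Function.leftLim ℓ s ≤ bigJumpPart ℓ ε s then 1 else 0)) with hF
  -- bounds of all relevant quantities on Ioc 0 1
  have hbounds : ∀ ε, ∀ s ∈ Ioc (0:ℝ) 1,
      0 ≤ leftLim (bigJumpPart ℓ ε) s ∧ leftLim (bigJumpPart ℓ ε) s ≤ leftLim ℓ s ∧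
      leftLim ℓ s ≤ ℓ s ∧ 0 ≤ bigJumpPart ℓ ε s ∧ bigJumpPart ℓ ε s ≤ ℓ s ∧ ℓ s ≤ K := by
    intro ε s hs
    refine ⟨hBleftnn ε s hs.1, hBleftle ε s hs.1, ℓ.mono.leftLim_le le_rfl,
      hBnn ε s, hBle ε s (le_of_lt hs.1), ?_⟩
    calc ℓ s ≤ ℓ 1 := ℓ.mono hs.2
      _ ≤ K := by rw [hK]; linarith
  -- measurability of the integrand
  have hFmeas : ∀ ε : ℝ, AEStronglyMeasurable (F ε) μ := by
    intro ε
    set G : ℝ → ℝ := fun s =>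
      (if Function.leftLim ℓ s = ℓ s then 0 else
        ((Lam (Function.leftLim ℓ s) - Lam (Function.leftLim (bigJumpPart ℓ ε) s))
            + (Lam (ℓ s) - Lam (bigJumpPart ℓ ε s)))
          / (ℓ s - Function.leftLim ℓ s)
          * (if Function.leftLim ℓ s ≤ bigJumpPart ℓ ε s then 1 else 0)) with hG
    have m1 : Measurable (fun s => ℓ s) := ℓ.mono.measurable
    have m2 : Measurable (leftLim ℓ) := by
      refine Monotone.measurable (fun a b hab => ?_)
      rcases eq_or_lt_of_le hab with rfl | h
      · exact le_rfl
      · exact le_trans (ℓ.mono.leftLim_le le_rfl) (ℓ.mono.le_leftLim h)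
    have m3 : Measurable (bigJumpPart ℓ ε) := (hBmono ε).measurable
    have m4 : Measurable (leftLim (bigJumpPart ℓ ε)) := by
      refine Monotone.measurable (fun a b hab => ?_)
      rcases eq_or_lt_of_le hab with rfl | h
      · exact le_rfl
      · exact le_trans ((hBmono ε).leftLim_le le_rfl) ((hBmono ε).le_leftLim h)
    have mG : Measurable G := by
      refine Measurable.ite (measurableSet_eq_fun m2 m1) measurable_const ?_
      refine Measurable.mul ?_ ?_
      · exact (((hLamMeas.comp m2).sub (hLamMeas.comp m4)).add
          ((hLamMeas.comp m1).sub (hLamMeas.comp m3))).div (m1.sub m2)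
      · exact Measurable.ite (measurableSet_le m2 m3) measurable_const measurable_const
    refine mG.aestronglyMeasurable.congr ?_
    rw [hμ]
    refine (ae_restrict_iff' measurableSet_Ioc).2 (ae_of_all _ fun s hs => ?_)
    obtain ⟨h1, h2, h3, h4, h5, h6⟩ := hbounds ε s hs
    have e1 : Lam (leftLim ℓ s) = lam (leftLim ℓ s) := hLamEq _ (le_trans h1 h2)
    have e2 : Lam (leftLim (bigJumpPart ℓ ε) s) = lam (leftLim (bigJumpPart ℓ ε) s) :=
      hLamEq _ h1
    have e3 : Lam (ℓ s) = lam (ℓ s) := hLamEq _ (hℓnn s)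
    have e4 : Lam (bigJumpPart ℓ ε s) = lam (bigJumpPart ℓ ε s) := hLamEq _ h4
    rw [hG, hF]
    dsimp only
    rw [e1, e2, e3, e4]
  -- the uniform bound
  have hbound : ∀ ε : ℝ, ∀ s ∈ Ioc (0:ℝ) 1, ‖F ε s‖ ≤ 2 * C := by
    intro ε s hs
    obtain ⟨h1, h2, h3, h4, h5, h6⟩ := hbounds ε s hs
    rw [hF]
    dsimp only
    by_cases hjump : leftLim ℓ s = ℓ s
    · rw [if_pos hjump, norm_zero]; linarith
    · rw [if_neg hjump]
      have hΔ : 0 < ℓ s - leftLim ℓ s := by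
        rcases lt_or_eq_of_le h3 with h | h
        · linarith
        · exact absurd h hjump
      by_cases hind : leftLim ℓ s ≤ bigJumpPart ℓ ε s
      · rw [if_pos hind, mul_one]
        set N : ℝ := (lam (leftLim ℓ s) - lam (leftLim (bigJumpPart ℓ ε) s))
          + (lam (ℓ s) - lam (bigJumpPart ℓ ε s)) with hN
        have k1 := key (leftLim (bigJumpPart ℓ ε) s) (leftLim ℓ s) h1 h2
          (le_trans h3 h6)
        have k2 := key (bigJumpPart ℓ ε s) (ℓ s) h4 h5 h6
        have hNnn : 0 ≤ N := by rw [hN]; linarith [k1.1, k2.1]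
        have hjb : bigJumpPart ℓ ε s ≤ leftLim (bigJumpPart ℓ ε) s + (ℓ s - leftLim ℓ s) :=
          hBjump ε s hs.1
        have hd1 : leftLim ℓ s - leftLim (bigJumpPart ℓ ε) s ≤ ℓ s - leftLim ℓ s := by
          linarith
        have hd2 : ℓ s - bigJumpPart ℓ ε s ≤ ℓ s - leftLim ℓ s := by linarith
        have hNle : N ≤ 2 * C * (ℓ s - leftLim ℓ s) := by
          have c1 : lam (leftLim ℓ s) - lam (leftLim (bigJumpPart ℓ ε) s)
              ≤ C * (ℓ s - leftLim ℓ s) := by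
            calc lam (leftLim ℓ s) - lam (leftLim (bigJumpPart ℓ ε) s)
                ≤ C * (leftLim ℓ s - leftLim (bigJumpPart ℓ ε) s) := k1.2
              _ ≤ C * (ℓ s - leftLim ℓ s) := by
                  exact mul_le_mul_of_nonneg_left hd1 hC0
          have c2 : lam (ℓ s) - lam (bigJumpPart ℓ ε s) ≤ C * (ℓ s - leftLim ℓ s) := by
            calc lam (ℓ s) - lam (bigJumpPart ℓ ε s)
                ≤ C * (ℓ s - bigJumpPart ℓ ε s) := k2.2
              _ ≤ C * (ℓ s - leftLim ℓ s) := mul_le_mul_of_nonneg_left hd2 hC0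
          rw [hN]; linarith
        rw [Real.norm_eq_abs, abs_div, abs_of_nonneg hNnn, abs_of_pos hΔ,
          div_le_iff₀ hΔ]
        exact hNle
      · rw [if_neg hind, mul_zero, norm_zero]; linarith
  -- pointwise convergence
  have hlim : ∀ s ∈ Ioc (0:ℝ) 1, Tendsto (fun ε => F ε s) (𝓝[>] (0:ℝ)) (𝓝 0) := by
    intro s hs
    by_cases hjump : leftLim ℓ s = ℓ s
    · have : (fun ε => F ε s) = fun _ => (0:ℝ) := by
        funext ε; rw [hF]; dsimp only; rw [if_pos hjump]
      rw [this]; exact tendsto_const_nhds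
    · have h3 : leftLim ℓ s ≤ ℓ s := ℓ.mono.leftLim_le le_rfl
      have hΔ : leftLim ℓ s < ℓ s := lt_of_le_of_ne h3 hjump
      -- convergence of the truncated sums
      have hBconv : Tendsto (fun ε => bigJumpPart ℓ ε s) (𝓝[>] (0:ℝ)) (𝓝 (ℓ s)) := by
        have heq : ∀ ε, bigJumpPart ℓ ε s = ∑' u, (Ioc (0:ℝ) s).indicator (g ε) u := by
          intro ε; rw [hB ε]
        simp only [heq]
        rw [hℓt s (le_of_lt hs.1)]
        refine tendsto_tsum_of_dominated_convergence (hJsum s) (fun u => ?_)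
          (Eventually.of_forall fun ε u => ?_)
        · by_cases hu : u ∈ Ioc (0:ℝ) s
          · simp only [indicator_of_mem hu]
            rcases eq_or_lt_of_le (hJ0 u) with h0 | h0
            · have : ∀ ε, g ε u = J u := by
                intro ε; rw [hg]; dsimp only; split_ifs
                · rfl
                · rw [← h0]
              simp only [this]; exact tendsto_const_nhds
            · refine tendsto_const_nhds.congr' ?_
              filter_upwards [Ioo_mem_nhdsGT_of_mem (⟨le_rfl, h0⟩ : (0:ℝ) ∈ Ico (0:ℝ) (J u))]
                with ε hε
              rw [hg]; dsimp only; rw [if_pos (le_of_lt hε.2)]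
          · simp only [indicator_of_notMem hu]; exact tendsto_const_nhds
        · by_cases hu : u ∈ Ioc (0:ℝ) s
          · simp only [indicator_of_mem hu, Real.norm_eq_abs, abs_of_nonneg (hg0 ε u)]
            exact hgJ ε u
          · simp only [indicator_of_notMem hu, norm_zero]
            exact le_rfl
      have hBleftconv : Tendsto (fun ε => leftLim (bigJumpPart ℓ ε) s) (𝓝[>] (0:ℝ))
          (𝓝 (leftLim ℓ s)) := by
        have heq : ∀ ε, leftLim (bigJumpPart ℓ ε) s
            = ∑' u, (Ioo (0:ℝ) s).indicator (g ε) u := fun ε => hBleft ε s hs.1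
        simp only [heq]
        rw [hℓleft s hs.1]
        have hJIoo : Summable ((Ioo (0:ℝ) s).indicator J) :=
          summable_indicator_mono hJ0 Ioo_subset_Ioc_self (hJsum s)
        refine tendsto_tsum_of_dominated_convergence hJIoo (fun u => ?_)
          (Eventually.of_forall fun ε u => ?_)
        · by_cases hu : u ∈ Ioo (0:ℝ) s
          · simp only [indicator_of_mem hu]
            rcases eq_or_lt_of_le (hJ0 u) with h0 | h0
            · have : ∀ ε, g ε u = J u := by
                intro ε; rw [hg]; dsimp only; split_ifs
                · rfl
                · rw [← h0]
              simp only [this]; exact tendsto_const_nhds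
            · refine tendsto_const_nhds.congr' ?_
              filter_upwards [Ioo_mem_nhdsGT_of_mem (⟨le_rfl, h0⟩ : (0:ℝ) ∈ Ico (0:ℝ) (J u))]
                with ε hε
              rw [hg]; dsimp only; rw [if_pos (le_of_lt hε.2)]
          · simp only [indicator_of_notMem hu]; exact tendsto_const_nhds
        · by_cases hu : u ∈ Ioo (0:ℝ) s
          · simp only [indicator_of_mem hu, Real.norm_eq_abs, abs_of_nonneg (hg0 ε u)]
            exact hgJ ε u
          · simp only [indicator_of_notMem hu, norm_zero]
            exact le_rfl
      -- convergence of lam of the truncated sums, via the Lipschitz estimate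
      have hlamB : Tendsto (fun ε => lam (bigJumpPart ℓ ε s)) (𝓝[>] (0:ℝ)) (𝓝 (lam (ℓ s))) := by
        have hsq : Tendsto (fun ε => lam (bigJumpPart ℓ ε s) - lam (ℓ s)) (𝓝[>] (0:ℝ))
            (𝓝 0) := by
          refine squeeze_zero_norm (a := fun ε => C * |bigJumpPart ℓ ε s - ℓ s|)
            (fun ε => ?_) ?_
          · obtain ⟨h1, h2, h3', h4, h5, h6⟩ := hbounds ε s hs
            have k2 := key (bigJumpPart ℓ ε s) (ℓ s) h4 h5 h6
            rw [Real.norm_eq_abs]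
            rw [abs_sub_comm, abs_of_nonneg (by linarith [k2.1] : 0 ≤ lam (ℓ s) - lam (bigJumpPart ℓ ε s))]
            calc lam (ℓ s) - lam (bigJumpPart ℓ ε s) ≤ C * (ℓ s - bigJumpPart ℓ ε s) := k2.2
              _ = C * |bigJumpPart ℓ ε s - ℓ s| := by
                rw [abs_sub_comm, abs_of_nonneg (by linarith : 0 ≤ ℓ s - bigJumpPart ℓ ε s)]
          · have : Tendsto (fun ε => bigJumpPart ℓ ε s - ℓ s) (𝓝[>] (0:ℝ)) (𝓝 0) := by
              simpa using hBconv.sub_const (ℓ s)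
            simpa using (this.abs.const_mul C)
        have h2 := hsq.add_const (lam (ℓ s))
        rw [zero_add] at h2
        refine h2.congr fun ε => by ring
      have hlamB' : Tendsto (fun ε => lam (leftLim (bigJumpPart ℓ ε) s)) (𝓝[>] (0:ℝ))
          (𝓝 (lam (leftLim ℓ s))) := by
        have hsq : Tendsto (fun ε => lam (leftLim (bigJumpPart ℓ ε) s) - lam (leftLim ℓ s))
            (𝓝[>] (0:ℝ)) (𝓝 0) := by
          refine squeeze_zero_norm
            (a := fun ε => C * |leftLim (bigJumpPart ℓ ε) s - leftLim ℓ s|)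
            (fun ε => ?_) ?_
          · obtain ⟨h1, h2, h3', h4, h5, h6⟩ := hbounds ε s hs
            have k1 := key (leftLim (bigJumpPart ℓ ε) s) (leftLim ℓ s) h1 h2 (le_trans h3' h6)
            rw [Real.norm_eq_abs]
            rw [abs_sub_comm, abs_of_nonneg (by linarith [k1.1] : 0 ≤ lam (leftLim ℓ s) - lam (leftLim (bigJumpPart ℓ ε) s))]
            calc lam (leftLim ℓ s) - lam (leftLim (bigJumpPart ℓ ε) s)
                ≤ C * (leftLim ℓ s - leftLim (bigJumpPart ℓ ε) s) := k1.2
              _ = C * |leftLim (bigJumpPart ℓ ε) s - leftLim ℓ s| := by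
                rw [abs_sub_comm, abs_of_nonneg (by linarith : 0 ≤ leftLim ℓ s - leftLim (bigJumpPart ℓ ε) s)]
          · have : Tendsto (fun ε => leftLim (bigJumpPart ℓ ε) s - leftLim ℓ s) (𝓝[>] (0:ℝ))
                (𝓝 0) := by simpa using hBleftconv.sub_const (leftLim ℓ s)
            simpa using (this.abs.const_mul C)
        have h2 := hsq.add_const (lam (leftLim ℓ s))
        rw [zero_add] at h2
        refine h2.congr fun ε => by ring
      -- eventually the indicator is 1
      have hev : ∀ᶠ ε in 𝓝[>] (0:ℝ), leftLim ℓ s ≤ bigJumpPart ℓ ε s := by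
        filter_upwards [hBconv.eventually (eventually_gt_nhds hΔ)] with ε hε
        exact le_of_lt hε
      -- the main limit
      have hmain : Tendsto (fun ε =>
          ((lam (leftLim ℓ s) - lam (leftLim (bigJumpPart ℓ ε) s))
            + (lam (ℓ s) - lam (bigJumpPart ℓ ε s))) / (ℓ s - leftLim ℓ s))
          (𝓝[>] (0:ℝ)) (𝓝 0) := by
        have h1 : Tendsto (fun ε =>
            (lam (leftLim ℓ s) - lam (leftLim (bigJumpPart ℓ ε) s))
              + (lam (ℓ s) - lam (bigJumpPart ℓ ε s))) (𝓝[>] (0:ℝ)) (𝓝 0) := by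
          have ha : Tendsto (fun ε : ℝ =>
              lam (leftLim ℓ s) - lam (leftLim (bigJumpPart ℓ ε) s)) (𝓝[>] (0:ℝ))
              (𝓝 (lam (leftLim ℓ s) - lam (leftLim ℓ s))) := tendsto_const_nhds.sub hlamB'
          have hb : Tendsto (fun ε : ℝ => lam (ℓ s) - lam (bigJumpPart ℓ ε s)) (𝓝[>] (0:ℝ))
              (𝓝 (lam (ℓ s) - lam (ℓ s))) := tendsto_const_nhds.sub hlamB
          have h2 := ha.add hb
          simpa using h2
        have h2 := h1.div_const (ℓ s - leftLim ℓ s)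
        rwa [zero_div] at h2
      refine hmain.congr' ?_
      filter_upwards [hev] with ε hε
      rw [hF]
      dsimp only
      rw [if_neg hjump, if_pos hε, mul_one]
  -- assemble using dominated convergence
  have hμ2 : (fun ε : ℝ => ∫ s in Ioc (0:ℝ) 1, F ε s ∂ℓ.measure)
      = fun ε : ℝ => ∫ s, F ε s ∂μ := by rfl
  have hint0 : (0:ℝ) = ∫ _s, (0:ℝ) ∂μ := by rw [integral_zero]
  have := tendsto_integral_filter_of_dominated_convergence (μ := μ)
    (l := 𝓝[>] (0:ℝ)) (F := F) (f := fun _ => (0:ℝ)) (fun _ => 2 * C)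
    (Eventually.of_forall hFmeas)
    (Eventually.of_forall fun ε => (ae_restrict_iff' measurableSet_Ioc).2
      (ae_of_all _ fun s hs => hbound ε s hs))
    (integrable_const _)
    ((ae_restrict_iff' measurableSet_Ioc).2 (ae_of_all _ fun s hs => hlim s hs))
  rw [integral_zero] at this
  exact this
end
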